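/- arXiv:math/0012269 — 3 statements merged into one kernel-verified Lean document; each statement's English description precedes it below -/
import Mathlib

section
/- Let K = ℚ(√d) be an imaginary quadratic field, where d < 0 is a squarefree integer, with ring of integers O_K, and let f ≥ 1 be an integer. Then Nat.card((O_K/fO_K)ˣ) ≥ φ(f)², where φ denotes Euler's totient function. -/
open IntermediateField NumberField Polynomial Module

/-- The imaginary quadratic field `ℚ(√d)` realised inside `ℂ`
(for `d < 0`, the element `i·√(-d)` is a square root of `d`). -/
noncomputable def imagQuadField (d : ℤ) : IntermediateField ℚ ℂ :=
  ℚ⟮(Complex.I * Real.sqrt (-(d : ℝ)) : ℂ)⟯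



theorem iqf_aeval (d : ℤ) (hd0 : d < 0) :
    aeval (Complex.I * Real.sqrt (-(d : ℝ)) : ℂ) (X ^ 2 - C (d:ℚ)) = 0 := by
  have hd' : (0:ℝ) ≤ -(d:ℝ) := by
    have : (d:ℝ) < 0 := by exact_mod_cast hd0
    linarith
  have h1 : ((Real.sqrt (-(d:ℝ)) : ℝ) : ℂ) ^ 2 = ((-(d:ℝ) : ℝ) : ℂ) := by
    rw [← Complex.ofReal_pow]
    norm_cast
    exact Real.sq_sqrt (by exact_mod_cast hd')
  simp only [map_sub, map_pow, aeval_X, aeval_C]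
  rw [mul_pow, Complex.I_sq, h1]
  have : ((algebraMap ℚ ℂ) (d:ℚ)) = (d:ℂ) := by simp
  rw [this]
  push_cast
  ring

theorem iqf_minpoly (d : ℤ) (hd0 : d < 0) :
    minpoly ℚ (Complex.I * Real.sqrt (-(d : ℝ)) : ℂ) = X ^ 2 - C (d:ℚ) := by
  have hirr : Irreducible (X ^ 2 - C (d:ℚ)) := by
    apply X_pow_sub_C_irreducible_of_prime Nat.prime_two
    intro b hb
    have h1 : (0:ℚ) ≤ b ^ 2 := by positivity
    have h2 : ((d:ℚ)) < 0 := by exact_mod_cast hd0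
    nlinarith [hb]
  exact (minpoly.eq_of_irreducible_of_monic hirr (iqf_aeval d hd0)
    (monic_X_pow_sub_C _ two_ne_zero)).symm

theorem iqf_finrank (d : ℤ) (hd0 : d < 0) : finrank ℚ (imagQuadField d) = 2 := by
  have hint : IsIntegral ℚ (Complex.I * Real.sqrt (-(d : ℝ)) : ℂ) :=
    ⟨X ^ 2 - C (d:ℚ), monic_X_pow_sub_C _ two_ne_zero, by
      have := iqf_aeval d hd0
      rwa [aeval_def] at this⟩
  rw [imagQuadField, adjoin.finrank hint, iqf_minpoly d hd0]
  exact natDegree_X_pow_sub_C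

theorem iqf_numberField (d : ℤ) (hd0 : d < 0) : NumberField (imagQuadField d) := by
  have : FiniteDimensional ℚ (imagQuadField d) := by
    have : 0 < finrank ℚ (imagQuadField d) := by rw [iqf_finrank d hd0]; norm_num
    exact FiniteDimensional.of_finrank_pos this
  exact ⟨⟩

theorem card_quot_eq (K : Type*) [Field K] [NumberField K] (h2 : finrank ℚ K = 2) (n : ℕ) :
    Nat.card (𝓞 K ⧸ Ideal.span {(n : 𝓞 K)}) = n ^ 2 := by
  have h1 : Nat.card (𝓞 K ⧸ Ideal.span {(n : 𝓞 K)})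
      = Ideal.absNorm (Ideal.span {(n : 𝓞 K)}) := by
    rw [Ideal.absNorm_apply, Submodule.cardQuot_apply]
  rw [h1, Ideal.absNorm_span_singleton]
  have hn : (n : 𝓞 K) = algebraMap ℤ (𝓞 K) (n : ℤ) := by push_cast; rfl
  rw [hn]
  have hb := Algebra.norm_algebraMap_of_basis (Module.finBasis ℤ (𝓞 K)) (n : ℤ)

  have : finrank ℤ (𝓞 K) = 2 := by rw [RingOfIntegers.rank, h2]
  rw [hb, this]
  simp [Int.natAbs_pow]

noncomputable def preimageEquiv {R A : Type*} [AddCommGroup R] [AddGroup A] (f : R →+ A)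
    (hf : Function.Surjective f) (S : Set A) :
    (f ⁻¹' S) ≃ S × f.ker := by
  classical
  choose s hs using hf
  exact
  { toFun := fun x => (⟨f x.1, x.2⟩, ⟨x.1 - s (f x.1), by
      simp [AddMonoidHom.mem_ker, map_sub, hs]⟩)
    invFun := fun y => ⟨s y.1.1 + y.2.1, by
      have : f (s y.1.1 + y.2.1) = y.1.1 := by
        have hk := y.2.2
        rw [AddMonoidHom.mem_ker] at hk
        simp [map_add, hs, hk]
      simp only [Set.mem_preimage, this]
      exact y.1.2⟩
    left_inv := fun x => by
      ext
      simp only [AddSubmonoid.mk_add_mk]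
      abel_nf
    right_inv := fun y => by
      have hk := y.2.2
      rw [AddMonoidHom.mem_ker] at hk
      ext <;> simp [map_add, hs, hk] <;> abel }

theorem card_preimage_addHom {R A : Type*} [AddCommGroup R] [AddGroup A] (f : R →+ A)
    (hf : Function.Surjective f) (S : Set A) :
    Nat.card (f ⁻¹' S) = Nat.card S * Nat.card f.ker := by
  rw [Nat.card_congr (preimageEquiv f hf S), Nat.card_prod]

noncomputable def unitsEquivIsUnitSet (M : Type*) [Monoid M] : Mˣ ≃ {x : M // IsUnit x} where
  toFun u := ⟨u, u.isUnit⟩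
  invFun x := x.2.unit
  left_inv u := by ext; simp
  right_inv x := by ext; simp

section
variable {A : Type*} [CommRing A] {p : ℕ}

theorem maxideal_card_le (hp : p.Prime) (hA : Nat.card A = p ^ 2)
    (m : Ideal A) (hm : m.IsMaximal) : (↑m : Set A).ncard ≤ p := by
  have hfin : Finite A := by
    have : 0 < Nat.card A := by rw [hA]; exact pow_pos hp.pos 2
    exact (Nat.card_pos_iff.mp this).2
  have hdvd : Nat.card m.toAddSubgroup ∣ Nat.card A := AddSubgroup.card_addSubgroup_dvd_card _
  rw [hA] at hdvd
  obtain ⟨j, hj, hcard⟩ := (Nat.dvd_prime_pow hp).mp hdvd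
  have hset : Nat.card m.toAddSubgroup = (↑m : Set A).ncard := by
    rw [← Nat.card_coe_set_eq]
    rfl
  have hne : j ≠ 2 := by
    intro h
    subst h
    have htop : m.toAddSubgroup = ⊤ := AddSubgroup.eq_top_of_card_eq _ (by rw [hcard, hA])
    have h1 : (1 : A) ∈ m := by
      have : (1 : A) ∈ m.toAddSubgroup := by rw [htop]; trivial
      exact this
    exact hm.ne_top (Ideal.eq_top_iff_one m |>.mpr h1)
  have hj1 : j ≤ 1 := by omega
  calc (↑m : Set A).ncard = p ^ j := by rw [← hset, hcard]
    _ ≤ p ^ 1 := Nat.pow_le_pow_right hp.pos hj1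
    _ = p := pow_one p

theorem residue_card_ge (hp : p.Prime) (hA : Nat.card A = p ^ 2)
    (m : Ideal A) (hm : m ≠ ⊤) : p ≤ Nat.card (A ⧸ m) := by
  have hfin : Finite A := by
    have : 0 < Nat.card A := by rw [hA]; exact pow_pos hp.pos 2
    exact (Nat.card_pos_iff.mp this).2
  have hdvd : Nat.card (A ⧸ m) ∣ Nat.card A :=
    AddSubgroup.card_dvd_of_surjective (Ideal.Quotient.mk m).toAddMonoidHom
      Ideal.Quotient.mk_surjective
  rw [hA] at hdvd
  obtain ⟨j, hj, hcard⟩ := (Nat.dvd_prime_pow hp).mp hdvd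
  have hnontriv : Nontrivial (A ⧸ m) := Ideal.Quotient.nontrivial_iff.mpr hm
  have hqfin : Finite (A ⧸ m) := Finite.of_surjective _ Ideal.Quotient.mk_surjective
  have h1 : 1 < Nat.card (A ⧸ m) := Finite.one_lt_card_iff_nontrivial.mpr hnontriv
  have hj1 : 1 ≤ j := by
    by_contra h
    push_neg at h
    interval_cases j
    simp at hcard
    omega
  calc p = p ^ 1 := (pow_one p).symm
    _ ≤ p ^ j := Nat.pow_le_pow_right hp.pos hj1
    _ = Nat.card (A ⧸ m) := hcard.symm

end

theorem nonunits_card_le {A : Type*} [CommRing A] {p : ℕ} (hp : p.Prime)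
    (hA : Nat.card A = p ^ 2) : {a : A | ¬ IsUnit a}.ncard ≤ 2 * p - 1 := by
  have hfin : Finite A := by
    have : 0 < Nat.card A := by rw [hA]; exact pow_pos hp.pos 2
    exact (Nat.card_pos_iff.mp this).2
  have hnontriv : Nontrivial A := Finite.one_lt_card_iff_nontrivial.mp
    (by rw [hA]; exact Nat.one_lt_pow (by norm_num) hp.one_lt)
  have hmem : ∀ a : A, ¬ IsUnit a → ∃ m : Ideal A, m.IsMaximal ∧ a ∈ m := by
    intro a ha
    have : Ideal.span {a} ≠ ⊤ := fun h => ha (Ideal.span_singleton_eq_top.mp h)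
    obtain ⟨m, hm, hle⟩ := Ideal.exists_le_maximal _ this
    exact ⟨m, hm, hle (Ideal.mem_span_singleton_self a)⟩
  by_cases hex : ∃ m1 m2 : Ideal A, m1.IsMaximal ∧ m2.IsMaximal ∧ m1 ≠ m2
  · obtain ⟨m1, m2, hm1, hm2, hne⟩ := hex
    -- m1 ⊓ m2 = ⊥
    have hcop : IsCoprime m1 m2 :=
      (Ideal.isCoprime_iff_sup_eq).mpr (hm1.coprime_of_ne hm2 hne)
    have hbot : m1 ⊓ m2 = ⊥ := by
      have hres1 := residue_card_ge hp hA m1 hm1.ne_top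
      have hres2 := residue_card_ge hp hA m2 hm2.ne_top
      have e := Ideal.quotientInfEquivQuotientProd m1 m2 hcop
      have hcardq : p * p ≤ Nat.card (A ⧸ (m1 ⊓ m2)) := by
        rw [Nat.card_congr e.toEquiv, Nat.card_prod]
        exact Nat.mul_le_mul hres1 hres2
      have hbij : Function.Bijective (Ideal.Quotient.mk (m1 ⊓ m2)) :=
        Ideal.Quotient.mk_surjective.bijective_of_nat_card_le
          (by rw [hA, pow_two]; exact hcardq)
      ext x
      simp only [Ideal.mem_bot]
      constructor
      · intro hx
        have h0 : Ideal.Quotient.mk (m1 ⊓ m2) x = Ideal.Quotient.mk (m1 ⊓ m2) 0 := by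
          rw [map_zero]
          exact Ideal.Quotient.eq_zero_iff_mem.mpr hx
        exact hbij.1 h0
      · rintro rfl
        exact (m1 ⊓ m2).zero_mem
    have hkey : ∀ m : Ideal A, m.IsMaximal → m = m1 ∨ m = m2 := by
      intro m hm
      have hle : m1 * m2 ≤ m := by
        calc m1 * m2 ≤ m1 ⊓ m2 := Ideal.mul_le_inf
          _ = ⊥ := hbot
          _ ≤ m := bot_le
      rcases (hm.isPrime.mul_le).mp hle with h | h
      · exact Or.inl (hm1.eq_of_le hm.ne_top h).symm
      · exact Or.inr (hm2.eq_of_le hm.ne_top h).symm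
    have hsub : {a : A | ¬ IsUnit a} ⊆ (↑m1 : Set A) ∪ ↑m2 := by
      intro a ha
      obtain ⟨m, hm, ham⟩ := hmem a ha
      rcases hkey m hm with rfl | rfl
      · exact Or.inl ham
      · exact Or.inr ham
    have h1 := maxideal_card_le hp hA m1 hm1
    have h2 := maxideal_card_le hp hA m2 hm2
    have hun : ((↑m1 : Set A) ∪ ↑m2).ncard + ((↑m1 : Set A) ∩ ↑m2).ncard
        = (↑m1 : Set A).ncard + (↑m2 : Set A).ncard := Set.ncard_union_add_ncard_inter _ _
    have hint : 1 ≤ ((↑m1 : Set A) ∩ ↑m2).ncard := by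
      rw [Nat.one_le_iff_ne_zero, ← Nat.pos_iff_ne_zero, Set.ncard_pos (Set.toFinite _)]
      exact ⟨0, m1.zero_mem, m2.zero_mem⟩
    have := Set.ncard_le_ncard hsub (Set.toFinite _)
    omega
  · push_neg at hex
    by_cases h0 : ∃ a : A, ¬ IsUnit a
    · obtain ⟨a0, ha0⟩ := h0
      obtain ⟨m0, hm0, _⟩ := hmem a0 ha0
      have hsub : {a : A | ¬ IsUnit a} ⊆ (↑m0 : Set A) := by
        intro a ha
        obtain ⟨m, hm, ham⟩ := hmem a ha
        rwa [hex m m0 hm hm0] at ham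
      have h1 := maxideal_card_le hp hA m0 hm0
      have h2 := Set.ncard_le_ncard hsub (Set.toFinite _)
      have := hp.two_le
      omega
    · push_neg at h0
      have : {a : A | ¬ IsUnit a} = ∅ := by
        ext a; simp [h0 a]
      rw [this, Set.ncard_empty]
      omega


section
variable {O : Type*} [CommRing O]

theorem isUnit_factor_iff (x : O) (k : ℕ) (hk : 1 ≤ k)
    (hle : Ideal.span {x ^ k} ≤ Ideal.span {x}) (r : O ⧸ Ideal.span {x ^ k}) :
    IsUnit r ↔ IsUnit (Ideal.Quotient.factor hle r) := by
  constructor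
  · exact fun h => h.map _
  · intro h
    obtain ⟨r₀, rfl⟩ := Ideal.Quotient.mk_surjective r
    rw [Ideal.Quotient.factor_mk] at h
    obtain ⟨b, hb⟩ := isUnit_iff_exists_inv.mp h
    obtain ⟨y₀, rfl⟩ := Ideal.Quotient.mk_surjective b
    have : Ideal.Quotient.mk (Ideal.span {x}) (r₀ * y₀ - 1) = 0 := by
      rw [map_sub, map_mul, hb]; simp
    obtain ⟨t, ht⟩ := Ideal.mem_span_singleton'.mp (Ideal.Quotient.eq_zero_iff_mem.mp this)
    -- r₀ * y₀ = 1 + t * x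
    have hry : r₀ * y₀ = 1 + t * x := by rw [ht]; ring
    have hnil : IsNilpotent (Ideal.Quotient.mk (Ideal.span {x ^ k}) (t * x)) := by
      refine ⟨k, ?_⟩
      rw [← map_pow, Ideal.Quotient.eq_zero_iff_mem]
      rw [mul_pow]
      exact Ideal.mul_mem_left _ _ (Ideal.mem_span_singleton_self _)
    have hu : IsUnit (Ideal.Quotient.mk (Ideal.span {x ^ k}) (r₀ * y₀)) := by
      rw [hry, map_add, map_one]
      have := (hnil.neg.isUnit_sub_one).neg
      simpa using this
    rw [map_mul] at hu
    exact isUnit_of_mul_isUnit_left hu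

end

set_option synthInstance.maxHeartbeats 1000000 in
set_option maxHeartbeats 2000000 in
theorem prime_pow_case (K : Type*) [Field K] [NumberField K] (h2 : finrank ℚ K = 2)
    (p k : ℕ) (hp : p.Prime) (hk : 0 < k) :
    Nat.totient (p ^ k) ^ 2 ≤
      Nat.card ((𝓞 K ⧸ Ideal.span {((p ^ k : ℕ) : 𝓞 K)})ˣ) := by
  set O := 𝓞 K
  have hcast : ((p ^ k : ℕ) : O) = ((p : ℕ) : O) ^ k := by push_cast; ring
  set x : O := ((p : ℕ) : O) with hx
  have hle : Ideal.span {x ^ k} ≤ Ideal.span {x} :=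
    Ideal.span_singleton_le_span_singleton.mpr (dvd_pow_self x (by omega))
  set I : Ideal O := Ideal.span {x ^ k}
  set J : Ideal O := Ideal.span {x}
  have hIeq : Ideal.span {((p ^ k : ℕ) : O)} = I := by rw [hcast]
  set π : O ⧸ I →+* O ⧸ J := Ideal.Quotient.factor hle
  have hπs : Function.Surjective π := by
    intro a
    obtain ⟨y, rfl⟩ := Ideal.Quotient.mk_surjective a
    exact ⟨Ideal.Quotient.mk I y, Ideal.Quotient.factor_mk hle y⟩
  -- cardinalities
  have hcardR : Nat.card (O ⧸ I) = (p ^ k) ^ 2 := by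
    rw [← hIeq]; exact card_quot_eq K h2 (p ^ k)
  have hcardA : Nat.card (O ⧸ J) = p ^ 2 := card_quot_eq K h2 p
  have hfinR : Finite (O ⧸ I) := by
    have : 0 < Nat.card (O ⧸ I) := by rw [hcardR]; exact pow_pos (pow_pos hp.pos k) 2
    exact (Nat.card_pos_iff.mp this).2
  have hfinA : Finite (O ⧸ J) := Finite.of_surjective _ hπs
  -- kernel cardinality
  have hker : Nat.card (O ⧸ I) = Nat.card (O ⧸ J) * Nat.card π.toAddMonoidHom.ker := by
    have := card_preimage_addHom π.toAddMonoidHom hπs Set.univ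
    rw [Set.preimage_univ] at this
    rw [Nat.card_congr (Equiv.Set.univ _).symm, this,
      Nat.card_congr (Equiv.Set.univ (O ⧸ J)).symm]
  have hkerval : Nat.card π.toAddMonoidHom.ker = p ^ (2 * k - 2) := by
    have hpow : (p ^ k) ^ 2 = p ^ 2 * p ^ (2 * k - 2) := by
      rw [← pow_mul, ← pow_add]
      congr 1
      omega
    have := hker
    rw [hcardR, hcardA, hpow] at this
    exact (Nat.eq_of_mul_eq_mul_left (pow_pos hp.pos 2) this.symm)
  -- units
  set U : Set (O ⧸ J) := {a | IsUnit a}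
  have hpre : {r : O ⧸ I | IsUnit r} = π ⁻¹' U := by
    ext r
    exact isUnit_factor_iff x k hk hle r
  have hcardU : (p - 1) ^ 2 ≤ U.ncard := by
    have hcompl : U.ncard + Uᶜ.ncard = p ^ 2 := by
      rw [Set.ncard_add_ncard_compl, ← hcardA]
    have hc : Uᶜ = {a : O ⧸ J | ¬ IsUnit a} := by
      ext a; simp [U]
    have hnon := nonunits_card_le hp hcardA
    rw [← hc] at hnon
    obtain ⟨q, rfl⟩ : ∃ q, p = q + 1 := ⟨p - 1, by have := hp.pos; omega⟩
    have e1 : (q + 1) ^ 2 = q ^ 2 + (2 * (q + 1) - 1) := by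
      have h : 2 * (q + 1) - 1 = 2 * q + 1 := by omega
      rw [h]; ring
    simp only [Nat.add_sub_cancel]
    omega
  -- assemble
  have hcards : Nat.card ((O ⧸ I)ˣ) = U.ncard * Nat.card π.toAddMonoidHom.ker := by
    rw [Nat.card_congr (unitsEquivIsUnitSet (O ⧸ I))]
    have : Nat.card {x : O ⧸ I // IsUnit x} = Nat.card (π ⁻¹' U) := by
      apply Nat.card_congr
      apply Equiv.subtypeEquiv (Equiv.refl _)
      intro a
      have := isUnit_factor_iff x k hk hle a
      exact this
    rw [this]
    have hco : (⇑π ⁻¹' U) = (⇑π.toAddMonoidHom ⁻¹' U) := rfl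
    rw [hco, card_preimage_addHom π.toAddMonoidHom hπs U, Nat.card_coe_set_eq]
  have htot : Nat.totient (p ^ k) ^ 2 = (p - 1) ^ 2 * p ^ (2 * k - 2) := by
    rw [Nat.totient_prime_pow hp hk, mul_pow, ← pow_mul]
    have : (k - 1) * 2 = 2 * k - 2 := by omega
    rw [this, mul_comm]
  rw [hIeq]
  rw [hcards, hkerval, htot]
  exact Nat.mul_le_mul_right _ hcardU


set_option synthInstance.maxHeartbeats 1000000 in
set_option maxHeartbeats 2000000 in
theorem main_nat (K : Type*) [Field K] [NumberField K] (h2 : finrank ℚ K = 2) :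
    ∀ n : ℕ, 0 < n →
      Nat.totient n ^ 2 ≤ Nat.card ((𝓞 K ⧸ Ideal.span {(n : 𝓞 K)})ˣ) := by
  intro n
  induction n using Nat.recOnPosPrimePosCoprime with
  | prime_pow p k hp hk =>
    intro _
    exact prime_pow_case K h2 p k hp hk
  | zero => intro h; omega
  | one =>
    intro _
    have hsp : Ideal.span {((1 : ℕ) : 𝓞 K)} = ⊤ := by
      rw [Nat.cast_one, Ideal.span_singleton_one]
    rw [hsp]
    haveI : Subsingleton (𝓞 K ⧸ (⊤ : Ideal (𝓞 K))) := by
      constructor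
      intro a b
      obtain ⟨a₀, rfl⟩ := Ideal.Quotient.mk_surjective a
      obtain ⟨b₀, rfl⟩ := Ideal.Quotient.mk_surjective b
      rw [Ideal.Quotient.eq]
      trivial
    have : Nat.card ((𝓞 K ⧸ (⊤ : Ideal (𝓞 K)))ˣ) = 1 :=
      Nat.card_eq_one_iff_unique.mpr ⟨inferInstance, inferInstance⟩
    rw [this, Nat.totient_one]
    norm_num
  | coprime a b ha hb hab iha ihb =>
    intro _
    have hcopZ : IsCoprime (a : ℤ) (b : ℤ) :=
      Int.isCoprime_iff_gcd_eq_one.mpr (by simpa [Int.gcd_natCast_natCast] using hab)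
    have hcopO : IsCoprime ((a : ℕ) : 𝓞 K) ((b : ℕ) : 𝓞 K) := by
      have := hcopZ.map (algebraMap ℤ (𝓞 K))
      simpa using this
    have hspan : Ideal.span {((a * b : ℕ) : 𝓞 K)}
        = Ideal.span {((a : ℕ) : 𝓞 K)} * Ideal.span {((b : ℕ) : 𝓞 K)} := by
      rw [Ideal.span_singleton_mul_span_singleton, Nat.cast_mul]
    have hcopI : IsCoprime (Ideal.span {((a : ℕ) : 𝓞 K)})
        (Ideal.span {((b : ℕ) : 𝓞 K)}) :=
      (Ideal.isCoprime_span_singleton_iff _ _).mpr hcopO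
    have e := Ideal.quotientMulEquivQuotientProd _ _ hcopI
    have hcards : Nat.card ((𝓞 K ⧸ Ideal.span {((a * b : ℕ) : 𝓞 K)})ˣ)
        = Nat.card ((𝓞 K ⧸ Ideal.span {((a : ℕ) : 𝓞 K)})ˣ)
          * Nat.card ((𝓞 K ⧸ Ideal.span {((b : ℕ) : 𝓞 K)})ˣ) := by
      rw [hspan]
      rw [Nat.card_congr ((Units.mapEquiv e.toMulEquiv).toEquiv.trans
        (MulEquiv.prodUnits).toEquiv)]
      exact Nat.card_prod _ _
    rw [hcards, Nat.totient_mul hab, mul_pow]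
    exact Nat.mul_le_mul (iha (by omega)) (ihb (by omega))

/-- For `K = ℚ(√d)` imaginary quadratic (`d < 0` squarefree) and an integer `f ≥ 1`,
the unit group of `O_K/fO_K` has cardinality at least `φ(f)²`. -/
theorem card_units_quotient_ge_totient_sq (d : ℤ) (hd : Squarefree d) (hd0 : d < 0)
    (f : ℤ) (hf : 1 ≤ f) :
    Nat.totient f.toNat ^ 2 ≤
      Nat.card ((𝓞 ↥(imagQuadField d) ⧸
        Ideal.span {(f : 𝓞 ↥(imagQuadField d))})ˣ) := by
  haveI hnf : NumberField (imagQuadField d) := iqf_numberField d hd0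
  have h2 := iqf_finrank d hd0
  have hn : (0:ℕ) < f.toNat := by omega
  have hmain := main_nat (imagQuadField d) h2 f.toNat hn
  have hcast : ((f.toNat : ℕ) : 𝓞 (imagQuadField d)) = (f : 𝓞 (imagQuadField d)) := by
    rw [← Int.cast_natCast, Int.toNat_of_nonneg (by omega : (0:ℤ) ≤ f)]
  rwa [hcast] at hmain
end

section
/- Let p be a prime with p ≥ 5. Then the group SL₂(ℤ_p) of 2×2 matrices of determinant 1 over the p-adic integers is perfect: its commutator subgroup is the whole group. -/
namespace SL2PadicAux

open Matrix
open scoped commutatorElement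

variable (p : ℕ) [Fact p.Prime]

noncomputable def SLU (x : ℤ_[p]) : Matrix.SpecialLinearGroup (Fin 2) ℤ_[p] :=
  ⟨!![1, x; 0, 1], by simp [Matrix.det_fin_two_of]⟩

noncomputable def SLL (x : ℤ_[p]) : Matrix.SpecialLinearGroup (Fin 2) ℤ_[p] :=
  ⟨!![1, 0; x, 1], by simp [Matrix.det_fin_two_of]⟩

lemma SLU_mul (x y : ℤ_[p]) : SLU p x * SLU p y = SLU p (x + y) := by
  apply Subtype.ext
  rw [Matrix.SpecialLinearGroup.coe_mul]
  ext i j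
  fin_cases i <;> fin_cases j <;>
    simp [SLU, Matrix.mul_apply, Fin.sum_univ_two] <;> ring

lemma SLL_mul (x y : ℤ_[p]) : SLL p x * SLL p y = SLL p (x + y) := by
  apply Subtype.ext
  rw [Matrix.SpecialLinearGroup.coe_mul]
  ext i j
  fin_cases i <;> fin_cases j <;>
    simp [SLL, Matrix.mul_apply, Fin.sum_univ_two] <;> ring

lemma SLL_zero : SLL p 0 = 1 := by
  apply Subtype.ext
  show !![(1 : ℤ_[p]), 0; 0, 1] = _
  rw [Matrix.SpecialLinearGroup.coe_one, Matrix.one_fin_two]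

lemma isUnit_of_not_dvd (n : ℕ) (hn : ¬ (p ∣ n)) : IsUnit (n : ℤ_[p]) := by
  rw [PadicInt.isUnit_iff]
  have h1 : ‖((n : ℤ) : ℤ_[p])‖ ≤ 1 := PadicInt.norm_le_one _
  have h2 : ¬ ‖((n : ℤ) : ℤ_[p])‖ < 1 := by
    rw [PadicInt.norm_int_lt_one_iff_dvd]
    exact_mod_cast hn
  have : ‖((n : ℤ) : ℤ_[p])‖ = 1 := le_antisymm h1 (not_lt.1 h2)
  simpa using this

variable (hp : 5 ≤ p)
include hp

lemma exists_ts : ∃ t s : ℤ_[p], (2 : ℤ_[p]) * t = 1 ∧ (3 : ℤ_[p]) * s = 1 := by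
  have hprime := (Fact.out : p.Prime)
  have h2 : IsUnit ((2 : ℕ) : ℤ_[p]) := by
    apply isUnit_of_not_dvd
    intro h
    have := Nat.le_of_dvd (by norm_num) h
    omega
  have h3 : IsUnit ((3 : ℕ) : ℤ_[p]) := by
    apply isUnit_of_not_dvd
    intro h
    have := Nat.le_of_dvd (by norm_num) h
    omega
  obtain ⟨u, hu⟩ := h2
  obtain ⟨v, hv⟩ := h3
  refine ⟨↑u⁻¹, ↑v⁻¹, ?_, ?_⟩
  · rw [show ((2:ℤ_[p])) = ((2:ℕ):ℤ_[p]) by norm_num, ← hu]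
    exact u.mul_inv
  · rw [show ((3:ℤ_[p])) = ((3:ℕ):ℤ_[p]) by norm_num, ← hv]
    exact v.mul_inv

lemma SLU_mem_commutator (x : ℤ_[p]) :
    SLU p x ∈ commutator (Matrix.SpecialLinearGroup (Fin 2) ℤ_[p]) := by
  obtain ⟨t, s, ht, hs⟩ := exists_ts p hp
  set D : Matrix.SpecialLinearGroup (Fin 2) ℤ_[p] :=
    ⟨!![2, 0; 0, t], by simp [Matrix.det_fin_two_of, ht]⟩ with hD
  have key : ⁅D, SLU p (s * x)⁆ = SLU p x := by
    rw [commutatorElement_def, mul_inv_eq_iff_eq_mul, mul_inv_eq_iff_eq_mul]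
    apply Subtype.ext
    simp only [Matrix.SpecialLinearGroup.coe_mul]
    ext i j
    fin_cases i <;> fin_cases j <;>
      simp [SLU, hD, Matrix.mul_apply, Fin.sum_univ_two] <;>
      linear_combination (-2 * s * x) * ht + (t * x) * hs
  rw [← key]
  exact Subgroup.commutator_mem_commutator (Subgroup.mem_top _) (Subgroup.mem_top _)

lemma SLL_mem_commutator (x : ℤ_[p]) :
    SLL p x ∈ commutator (Matrix.SpecialLinearGroup (Fin 2) ℤ_[p]) := by
  obtain ⟨t, s, ht, hs⟩ := exists_ts p hp
  set D : Matrix.SpecialLinearGroup (Fin 2) ℤ_[p] :=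
    ⟨!![2, 0; 0, t], by simp [Matrix.det_fin_two_of, ht]⟩ with hD
  have key : ⁅D, SLL p (-(4 * s * x))⁆ = SLL p x := by
    rw [commutatorElement_def, mul_inv_eq_iff_eq_mul, mul_inv_eq_iff_eq_mul]
    apply Subtype.ext
    simp only [Matrix.SpecialLinearGroup.coe_mul]
    ext i j
    fin_cases i <;> fin_cases j <;>
      simp [SLL, hD, Matrix.mul_apply, Fin.sum_univ_two] <;>
      linear_combination (-2 * s * x) * ht + (2 * x) * hs
  rw [← key]
  exact Subgroup.commutator_mem_commutator (Subgroup.mem_top _) (Subgroup.mem_top _)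

lemma mem_of_unit_c (a b c d : ℤ_[p]) (hdet : a * d - b * c = 1) (hc : IsUnit c) :
    (⟨!![a, b; c, d], by rw [Matrix.det_fin_two_of]; linear_combination hdet⟩ :
      Matrix.SpecialLinearGroup (Fin 2) ℤ_[p]) ∈
      commutator (Matrix.SpecialLinearGroup (Fin 2) ℤ_[p]) := by
  obtain ⟨w, hw⟩ := hc
  have hci : c * (↑w⁻¹ : ℤ_[p]) = 1 := by rw [← hw]; exact w.mul_inv
  have key : (⟨!![a, b; c, d], by rw [Matrix.det_fin_two_of]; linear_combination hdet⟩ :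
      Matrix.SpecialLinearGroup (Fin 2) ℤ_[p])
      = SLU p ((a - 1) * ↑w⁻¹) * SLL p c * SLU p ((d - 1) * ↑w⁻¹) := by
    apply Subtype.ext
    simp only [Matrix.SpecialLinearGroup.coe_mul]
    ext i j
    fin_cases i <;> fin_cases j <;>
      simp [SLU, SLL, Matrix.mul_apply, Fin.sum_univ_two]
    · linear_combination (-(a - 1)) * hci
    · linear_combination (-(b + (a - 1) * (d - 1) * (↑w⁻¹ : ℤ_[p]))) * hci
        + (-(↑w⁻¹ : ℤ_[p])) * hdet
    · linear_combination (-(d - 1)) * hci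
  have mem : SLU p ((a - 1) * ↑w⁻¹) * SLL p c * SLU p ((d - 1) * ↑w⁻¹) ∈
      commutator (Matrix.SpecialLinearGroup (Fin 2) ℤ_[p]) :=
    Subgroup.mul_mem _ (Subgroup.mul_mem _ (SLU_mem_commutator p hp _)
      (SLL_mem_commutator p hp _)) (SLU_mem_commutator p hp _)
  rwa [← key] at mem

lemma mem_of_unit_c' (M : Matrix.SpecialLinearGroup (Fin 2) ℤ_[p])
    (hc : IsUnit ((M : Matrix (Fin 2) (Fin 2) ℤ_[p]) 1 0)) :
    M ∈ commutator (Matrix.SpecialLinearGroup (Fin 2) ℤ_[p]) := by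
  have hdet : (M : Matrix (Fin 2) (Fin 2) ℤ_[p]) 0 0 * (M : Matrix (Fin 2) (Fin 2) ℤ_[p]) 1 1
      - (M : Matrix (Fin 2) (Fin 2) ℤ_[p]) 0 1 * (M : Matrix (Fin 2) (Fin 2) ℤ_[p]) 1 0 = 1 := by
    rw [← Matrix.det_fin_two]; exact M.prop
  have hM : M = (⟨!![(M : Matrix (Fin 2) (Fin 2) ℤ_[p]) 0 0, (M : Matrix (Fin 2) (Fin 2) ℤ_[p]) 0 1;
        (M : Matrix (Fin 2) (Fin 2) ℤ_[p]) 1 0, (M : Matrix (Fin 2) (Fin 2) ℤ_[p]) 1 1],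
      by rw [Matrix.det_fin_two_of]; linear_combination hdet⟩ :
        Matrix.SpecialLinearGroup (Fin 2) ℤ_[p]) :=
    Subtype.ext (Matrix.eta_fin_two _)
  have mem := mem_of_unit_c p hp _ _ _ _ hdet hc
  rwa [← hM] at mem

lemma mem_all (M : Matrix.SpecialLinearGroup (Fin 2) ℤ_[p]) :
    M ∈ commutator (Matrix.SpecialLinearGroup (Fin 2) ℤ_[p]) := by
  have hdet : (M : Matrix (Fin 2) (Fin 2) ℤ_[p]) 0 0 * (M : Matrix (Fin 2) (Fin 2) ℤ_[p]) 1 1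
      - (M : Matrix (Fin 2) (Fin 2) ℤ_[p]) 0 1 * (M : Matrix (Fin 2) (Fin 2) ℤ_[p]) 1 0 = 1 := by
    rw [← Matrix.det_fin_two]; exact M.prop
  by_cases hc : IsUnit ((M : Matrix (Fin 2) (Fin 2) ℤ_[p]) 1 0)
  · exact mem_of_unit_c' p hp M hc
  · have ha : IsUnit ((M : Matrix (Fin 2) (Fin 2) ℤ_[p]) 0 0) := by
      have h1 : IsUnit ((M : Matrix (Fin 2) (Fin 2) ℤ_[p]) 0 0 * (M : Matrix (Fin 2) (Fin 2) ℤ_[p]) 1 1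
          + -((M : Matrix (Fin 2) (Fin 2) ℤ_[p]) 0 1 * (M : Matrix (Fin 2) (Fin 2) ℤ_[p]) 1 0)) := by
        rw [← sub_eq_add_neg, hdet]; exact isUnit_one
      rcases IsLocalRing.isUnit_or_isUnit_of_isUnit_add h1 with h | h
      · exact isUnit_of_mul_isUnit_left h
      · have h' : IsUnit ((M : Matrix (Fin 2) (Fin 2) ℤ_[p]) 0 1
            * (M : Matrix (Fin 2) (Fin 2) ℤ_[p]) 1 0) := by simpa using h.neg
        exact absurd (isUnit_of_mul_isUnit_right h') hc
    have hac : IsUnit ((M : Matrix (Fin 2) (Fin 2) ℤ_[p]) 0 0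
        + (M : Matrix (Fin 2) (Fin 2) ℤ_[p]) 1 0) := by
      by_contra h
      have h1 : (M : Matrix (Fin 2) (Fin 2) ℤ_[p]) 0 0 + (M : Matrix (Fin 2) (Fin 2) ℤ_[p]) 1 0
          ∈ IsLocalRing.maximalIdeal ℤ_[p] := by
        rwa [IsLocalRing.mem_maximalIdeal, mem_nonunits_iff]
      have h2 : (M : Matrix (Fin 2) (Fin 2) ℤ_[p]) 1 0 ∈ IsLocalRing.maximalIdeal ℤ_[p] := by
        rwa [IsLocalRing.mem_maximalIdeal, mem_nonunits_iff]
      have h3 := Ideal.sub_mem _ h1 h2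
      rw [add_sub_cancel_right] at h3
      exact (mem_nonunits_iff.1 ((IsLocalRing.mem_maximalIdeal _).1 h3)) ha
    have hN : IsUnit (((SLL p 1 * M : Matrix.SpecialLinearGroup (Fin 2) ℤ_[p]) :
        Matrix (Fin 2) (Fin 2) ℤ_[p]) 1 0) := by
      have hentry : ((SLL p 1 * M : Matrix.SpecialLinearGroup (Fin 2) ℤ_[p]) :
          Matrix (Fin 2) (Fin 2) ℤ_[p]) 1 0
          = (M : Matrix (Fin 2) (Fin 2) ℤ_[p]) 0 0 + (M : Matrix (Fin 2) (Fin 2) ℤ_[p]) 1 0 := by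
        rw [Matrix.SpecialLinearGroup.coe_mul]
        simp [SLL, Matrix.mul_apply, Fin.sum_univ_two]
      rwa [hentry]
    have mem : SLL p (-1) * (SLL p 1 * M)
        ∈ commutator (Matrix.SpecialLinearGroup (Fin 2) ℤ_[p]) :=
      Subgroup.mul_mem _ (SLL_mem_commutator p hp _) (mem_of_unit_c' p hp _ hN)
    have hEq : SLL p (-1) * (SLL p 1 * M) = M := by
      rw [← mul_assoc, SLL_mul]
      norm_num [SLL_zero]
    rwa [hEq] at mem

end SL2PadicAux

/-- For a prime `p ≥ 5`, the group `SL₂(ℤ_p)` is perfect: its commutator subgroup is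
the whole group. -/
theorem SL2_padicInt_perfect (p : ℕ) [Fact p.Prime] (hp : 5 ≤ p) :
    commutator (Matrix.SpecialLinearGroup (Fin 2) ℤ_[p]) = ⊤ := by
  rw [Subgroup.eq_top_iff']
  exact fun M => SL2PadicAux.mem_all p hp M
end

section
/- Let M ⊆ ℂ be a finite Galois extension of ℚ containing an imaginary quadratic field K, and suppose the restriction c to M of complex conjugation acts on Gal(M/K) by inversion: c·g·c⁻¹ = g⁻¹ for all g ∈ Gal(M/K) (in particular Gal(M/K) is abelian). Then for every intermediate field M₀ with ℚ ⊆ M₀ ⊆ M such that M₀ is Galois over ℚ with abelian Galois group, and for every g ∈ Gal(M/K), the automorphism g² fixes M₀ pointwise; consequently [M₀ : M₀ ∩ K] ≤ the cardinality of the 2-torsion subgroup of Gal(M/K) times 2. -/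
open IntermediateField

set_option synthInstance.maxHeartbeats 400000

private lemma sq_eq_one_of_conj_inv' {H : Type*} [Group H] (γ ρ ρ' : H)
    (hgg : ρ * ρ' = 1) (hswap : γ * ρ = ρ' * γ) (hcomm : ∀ a b : H, a * b = b * a) :
    ρ * ρ = 1 := by
  have h2 : ρ * γ = ρ' * γ := by
    rw [← hcomm γ ρ]
    exact hswap
  have h3 : ρ = ρ⁻¹ :=
    (mul_right_cancel h2).trans (inv_eq_of_mul_eq_one_right hgg).symm
  exact (congrArg (fun x => ρ * x) h3).trans (mul_inv_cancel _)

set_option maxHeartbeats 8000000 in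
/-- Let `M ⊆ ℂ` be a finite Galois extension of `ℚ` containing an imaginary quadratic field
`K = ℚ(√d)`, and suppose that complex conjugation restricts to an automorphism `c` of `M`
acting by inversion on `Gal(M/K)`.  Then for every intermediate field `M₀` of `M/ℚ` that is
abelian Galois over `ℚ`, and every `g ∈ Gal(M/K)`, the automorphism `g²` fixes `M₀`
pointwise; consequently `[M₀ : M₀ ∩ K]` is at most twice the cardinality of the `2`-torsion
subgroup of `Gal(M/K)`. -/
theorem anticyclotomic_abelian_subfield_bound
    (M : IntermediateField ℚ ℂ) [FiniteDimensional ℚ M] [IsGalois ℚ M]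
    (K : IntermediateField ℚ M)
    (hK : ∃ (d : ℤ) (x : M), Squarefree d ∧ d < 0 ∧ x ^ 2 = (d : M) ∧ K = ℚ⟮x⟯)
    (c : M ≃ₐ[ℚ] M)
    (hc : ∀ y : M, ((c y : M) : ℂ) = starRingEnd ℂ (y : ℂ))
    (hinv : ∀ g ∈ K.fixingSubgroup, c * g * c⁻¹ = g⁻¹)
    (M₀ : IntermediateField ℚ M) [IsGalois ℚ M₀]
    (hab : ∀ σ τ : M₀ ≃ₐ[ℚ] M₀, σ * τ = τ * σ) :
    (∀ g ∈ K.fixingSubgroup, ∀ y ∈ M₀, (g ^ 2 : M ≃ₐ[ℚ] M) y = y) ∧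
    Module.finrank ↥(M₀ ⊓ K)
        ↥(IntermediateField.extendScalars (inf_le_left : M₀ ⊓ K ≤ M₀)) ≤
      Nat.card {g : M ≃ₐ[ℚ] M // g ∈ K.fixingSubgroup ∧ g ^ 2 = 1} * 2 := by
  classical
  -- transfer the instance and hypothesis from `lift M₀` to `M₀`
  have e : ↥M₀ ≃ₐ[ℚ] ↥M₀ := AlgEquiv.refl
  haveI : IsGalois ℚ ↥M₀ := IsGalois.of_algEquiv e
  have hab' : ∀ σ τ : ↥M₀ ≃ₐ[ℚ] ↥M₀, σ * τ = τ * σ := by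
    intro σ τ
    have h := hab ((AlgEquiv.autCongr e).symm σ) ((AlgEquiv.autCongr e).symm τ)
    rw [← map_mul, ← map_mul] at h
    exact (AlgEquiv.autCongr e).symm.injective h
  -- commutativity of the fixing subgroup
  have hcomm : ∀ g ∈ K.fixingSubgroup, ∀ h ∈ K.fixingSubgroup, g * h = h * g := by
    intro g hg h hh
    have h1 := hinv g hg
    have h2 := hinv h hh
    have h3 := hinv (g * h) (mul_mem hg hh)
    have h4 : g⁻¹ * h⁻¹ = h⁻¹ * g⁻¹ := by
      have e1 : c * (g * h) * c⁻¹ = (c * g * c⁻¹) * (c * h * c⁻¹) := by group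
      rw [h3, h1, h2, mul_inv_rev] at e1
      exact e1.symm
    have h5 := congrArg (fun x => x⁻¹) h4
    simpa [mul_inv_rev] using h5.symm
  -- the restriction homomorphism to `M₀`
  let res : (M ≃ₐ[ℚ] M) →* (↥M₀ ≃ₐ[ℚ] ↥M₀) := AlgEquiv.restrictNormalHom ↥M₀
  have hres : ∀ (σ : M ≃ₐ[ℚ] M) (x : M₀), ((res σ x : M₀) : M) = σ x := fun σ x =>
    AlgEquiv.restrictNormal_commutes σ M₀ x
  -- part 1
  have part1 : ∀ g ∈ K.fixingSubgroup, ∀ y ∈ M₀, (g ^ 2 : M ≃ₐ[ℚ] M) y = y := by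
    intro g hg y hy
    have hcg := hinv g hg
    have hgg : res g * res (g⁻¹) = 1 := by
      rw [← map_mul, mul_inv_cancel]
      exact map_one res
    have hswap : res c * res g = res (g⁻¹) * res c := by
      rw [← map_mul, ← map_mul]
      congr 1
      rw [← hcg, inv_mul_cancel_right]
    have hσ : res g * res g = 1 :=
      sq_eq_one_of_conj_inv' (res c) (res g) (res (g⁻¹)) hgg hswap hab'
    have hres2 : res (g ^ 2) = 1 :=
      ((congrArg res (pow_two g)).trans (map_mul res g g)).trans hσ
    have key2 := congrArg (fun σ : ↥M₀ ≃ₐ[ℚ] ↥M₀ => ((σ ⟨y, hy⟩ : ↥M₀) : M)) hres2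
    exact ((hres (g ^ 2) ⟨y, hy⟩).symm.trans key2).trans rfl
  refine ⟨part1, ?_⟩
  -- the restriction of `g ^ 2` to `M₀` is trivial, at the level of automorphisms of `M₀`
  have hres2 : ∀ g ∈ K.fixingSubgroup, res (g ^ 2) = 1 := by
    intro g hg
    ext x
    exact congrArg (fun z : M => (z : ℂ)) ((hres (g ^ 2) x).trans (part1 g hg x.1 x.2))
  -- the image of the fixing subgroup in `Gal(M₀/ℚ)`
  let P : Subgroup (↥M₀ ≃ₐ[ℚ] ↥M₀) := K.fixingSubgroup.map res
  -- membership in the fixed field of `P`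
  have hPmem : ∀ x : ↥M₀, x ∈ fixedField P ↔ (x : M) ∈ K := by
    intro x
    constructor
    · intro hx
      have hxf : (x : M) ∈ fixedField K.fixingSubgroup := by
        intro g
        have hgP : res g.1 ∈ P := Subgroup.mem_map.2 ⟨g.1, g.2, rfl⟩
        have := hx ⟨res g.1, hgP⟩
        calc (g.1 : M ≃ₐ[ℚ] M) (x : M) = ((res g.1 x : M₀) : M) := (hres g.1 x).symm
          _ = (x : M) := by rw [show res g.1 x = x from this]
      rwa [IsGalois.fixedField_fixingSubgroup K] at hxf
    · intro hx gp
      obtain ⟨g, hg, hgeq⟩ := Subgroup.mem_map.1 gp.2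
      have hcoe : ((gp : ↥M₀ ≃ₐ[ℚ] ↥M₀) x : M) = ((res g x : M₀) : M) := by
        rw [hgeq]
      exact Subtype.coe_injective
        (hcoe.trans ((hres g x).trans
          (((IntermediateField.mem_fixingSubgroup_iff K g).1 hg) (x : M) hx)))
  -- transfer the finrank to the fixed field of `P`
  let i : ↥(M₀ ⊓ K) ≃+* ↥(fixedField P) :=
    { toFun := fun x => ⟨⟨x.1, x.2.1⟩, (hPmem ⟨x.1, x.2.1⟩).2 x.2.2⟩
      invFun := fun y => ⟨(y.1 : M), ⟨y.1.2, (hPmem y.1).1 y.2⟩⟩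
      left_inv := fun _ => rfl
      right_inv := fun _ => rfl
      map_mul' := fun _ _ => rfl
      map_add' := fun _ _ => rfl }
  let j : ↥(IntermediateField.extendScalars (inf_le_left : M₀ ⊓ K ≤ M₀)) ≃+* ↥M₀ :=
    { toFun := fun x => ⟨x.1, x.2⟩
      invFun := fun x => ⟨x.1, x.2⟩
      left_inv := fun _ => rfl
      right_inv := fun _ => rfl
      map_mul' := fun _ _ => rfl
      map_add' := fun _ _ => rfl }
  have hrank : Module.rank ↥(M₀ ⊓ K)
      ↥(IntermediateField.extendScalars (inf_le_left : M₀ ⊓ K ≤ M₀))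
      = Module.rank ↥(fixedField P) ↥M₀ :=
    Algebra.rank_eq_of_equiv_equiv i j (by ext x; rfl)
  have hfr : Module.finrank ↥(M₀ ⊓ K)
      ↥(IntermediateField.extendScalars (inf_le_left : M₀ ⊓ K ≤ M₀))
      = Module.finrank ↥(fixedField P) ↥M₀ := by
    simp only [Module.finrank]
    rw [hrank]
  rw [hfr, IntermediateField.finrank_fixedField_eq_card]
  -- group theory: `Nat.card P ≤ Nat.card (2-torsion)`
  let f : ↥K.fixingSubgroup →* (↥M₀ ≃ₐ[ℚ] ↥M₀) := res.comp K.fixingSubgroup.subtype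
  have hrangef : f.range = P := by
    ext x
    simp only [MonoidHom.mem_range, Subgroup.mem_map, MonoidHom.comp_apply,
      Subgroup.coe_subtype, Subtype.exists, f, P]
    constructor
    · rintro ⟨g, hg, rfl⟩; exact ⟨g, hg, rfl⟩
    · rintro ⟨g, hg, rfl⟩; exact ⟨g, hg, rfl⟩
  let sq : ↥K.fixingSubgroup →* ↥K.fixingSubgroup :=
    { toFun := fun g => g * g
      map_one' := by simp
      map_mul' := by
        intro a b
        have hc1 : (b : M ≃ₐ[ℚ] M) * a = (a : M ≃ₐ[ℚ] M) * b := hcomm b.1 b.2 a.1 a.2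
        apply Subtype.coe_injective
        push_cast
        rw [mul_assoc (a : M ≃ₐ[ℚ] M) b ((a : M ≃ₐ[ℚ] M) * b), ← mul_assoc (b : M ≃ₐ[ℚ] M) a b,
          hc1]
        group }
  have hsub : sq.range ≤ f.ker := by
    rintro x ⟨g, rfl⟩
    have hsqg : ((sq g : ↥K.fixingSubgroup) : M ≃ₐ[ℚ] M) = (g : M ≃ₐ[ℚ] M) ^ 2 :=
      (pow_two _).symm
    have : f (sq g) = 1 := by
      show res ((sq g : ↥K.fixingSubgroup) : M ≃ₐ[ℚ] M) = 1
      rw [hsqg]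
      exact hres2 g.1 g.2
    exact this
  haveI : Finite (M ≃ₐ[ℚ] M) := Finite.of_fintype _
  have h1 : Nat.card ↥K.fixingSubgroup = Nat.card (↥K.fixingSubgroup ⧸ f.ker) * Nat.card f.ker :=
    Subgroup.card_eq_card_quotient_mul_card_subgroup f.ker
  have h2 : Nat.card ↥K.fixingSubgroup = Nat.card (↥K.fixingSubgroup ⧸ sq.ker) * Nat.card sq.ker :=
    Subgroup.card_eq_card_quotient_mul_card_subgroup sq.ker
  have e1 : Nat.card (↥K.fixingSubgroup ⧸ f.ker) = Nat.card f.range :=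
    Nat.card_congr (QuotientGroup.quotientKerEquivRange f).toEquiv
  have e2 : Nat.card (↥K.fixingSubgroup ⧸ sq.ker) = Nat.card sq.range :=
    Nat.card_congr (QuotientGroup.quotientKerEquivRange sq).toEquiv
  have hle : Nat.card sq.range ≤ Nat.card f.ker := Subgroup.card_le_of_le hsub
  have hkerpos : 0 < Nat.card f.ker := Nat.card_pos
  have key : Nat.card f.range ≤ Nat.card sq.ker := by
    rw [e1] at h1
    rw [e2] at h2
    have : Nat.card f.range * Nat.card f.ker ≤ Nat.card sq.ker * Nat.card f.ker := by
      calc Nat.card f.range * Nat.card f.ker = Nat.card sq.range * Nat.card sq.ker := by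
            rw [← h1, h2]
        _ ≤ Nat.card f.ker * Nat.card sq.ker := Nat.mul_le_mul_right _ hle
        _ = Nat.card sq.ker * Nat.card f.ker := Nat.mul_comm _ _
    exact Nat.le_of_mul_le_mul_right this hkerpos
  have eT : Nat.card sq.ker
      = Nat.card {g : M ≃ₐ[ℚ] M // g ∈ K.fixingSubgroup ∧ g ^ 2 = 1} := by
    apply Nat.card_congr
    refine ⟨fun x => ⟨x.1.1, x.1.2, ?_⟩, fun y => ⟨⟨y.1, y.2.1⟩, ?_⟩, fun _ => rfl, fun _ => rfl⟩
    · have hx : (x.1 : ↥K.fixingSubgroup) * x.1 = 1 := x.2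
      have := congrArg (Subtype.val) hx
      push_cast at this
      rw [pow_two]
      exact this
    · have hy : (y.1 : M ≃ₐ[ℚ] M) ^ 2 = 1 := y.2.2
      show (⟨y.1, y.2.1⟩ : ↥K.fixingSubgroup) * ⟨y.1, y.2.1⟩ = 1
      apply Subtype.coe_injective
      push_cast
      rw [← pow_two]
      exact hy
  calc Nat.card P = Nat.card f.range := by rw [hrangef]
    _ ≤ Nat.card sq.ker := key
    _ = Nat.card {g : M ≃ₐ[ℚ] M // g ∈ K.fixingSubgroup ∧ g ^ 2 = 1} := eT
    _ ≤ Nat.card {g : M ≃ₐ[ℚ] M // g ∈ K.fixingSubgroup ∧ g ^ 2 = 1} * 2 :=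
        Nat.le_mul_of_pos_right _ (by norm_num)
end
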